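/- arXiv:2404.05615 — 2 statements merged into one kernel-verified Lean document; each statement's English description precedes it below -/
import Mathlib

section
/- Let d ≥ 1, let Ω ⊆ ℝ^d be a bounded open set, and let q : ℝ^d → ℝ be a C² function with compact support contained in Ω. Let f : ℝ^d → ℝ^d be C¹ and D : ℝ^d → ℝ^{d×d} be C², and suppose: (i) D is uniformly elliptic on Ω with constant C_D > 0, i.e. ∑_{i,j} D_{ij}(x) ξ_i ξ_j ≥ C_D |ξ|² for all x ∈ Ω and ξ ∈ ℝ^d; (ii) C_P > 0 is a Poincaré constant for Ω, i.e. ∫_Ω u² dx ≤ C_P ∫_Ω |∇u|² dx for every C¹ function u compactly supported in Ω; (iii) with b_i = (1/2) ∑_{j=1}^d ∂_{x_j} D_{ij} − f_i, there is a constant C₀ > 0 such that C_D/C_P − (∇·b)(x) ≥ C₀ for all x ∈ Ω. Then C₀² ∫_Ω q(x)² dx ≤ 4 ∫_Ω (ℒq)(x)² dx, where ℒq = −∑_{i=1}^d ∂_{x_i}(f_i q) + (1/2) ∑_{i,j=1}^d ∂_{x_i}∂_{x_j}(D_{ij} q). -/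
open MeasureTheory

/-- Partial derivative in the `i`-th coordinate direction. -/
noncomputable def pd {d : ℕ} (i : Fin d) (g : (Fin d → ℝ) → ℝ) : (Fin d → ℝ) → ℝ :=
  fun x => fderiv ℝ g x (Pi.single i 1)

/-- The Fokker-Planck operator `ℒq = -∑ᵢ ∂ᵢ(fᵢ q) + (1/2) ∑ᵢⱼ ∂ᵢ∂ⱼ(Dᵢⱼ q)`. -/
noncomputable def fokkerPlanck {d : ℕ} (f : (Fin d → ℝ) → Fin d → ℝ)
    (D : (Fin d → ℝ) → Fin d → Fin d → ℝ) (q : (Fin d → ℝ) → ℝ) : (Fin d → ℝ) → ℝ :=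
  fun x => -(∑ i, pd i (fun y => f y i * q y) x)
    + (1 / 2) * ∑ i, ∑ j, pd i (pd j (fun y => D y i j * q y)) x

/-- The vector field `bᵢ = (1/2) ∑ⱼ ∂ⱼ Dᵢⱼ - fᵢ`. -/
noncomputable def bvec {d : ℕ} (f : (Fin d → ℝ) → Fin d → ℝ)
    (D : (Fin d → ℝ) → Fin d → Fin d → ℝ) : (Fin d → ℝ) → Fin d → ℝ :=
  fun x i => (1 / 2) * ∑ j, pd j (fun y => D y i j) x - f x i

/-- The divergence `∇·b = ∑ᵢ ∂ᵢ bᵢ` of the vector field `b`. -/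
noncomputable def divb {d : ℕ} (f : (Fin d → ℝ) → Fin d → ℝ)
    (D : (Fin d → ℝ) → Fin d → Fin d → ℝ) : (Fin d → ℝ) → ℝ :=
  fun x => ∑ i, pd i (fun y => bvec f D y i) x

variable {d : ℕ}

lemma contDiff_pd {n : ℕ∞} {g : (Fin d → ℝ) → ℝ} (i : Fin d)
    (hg : ContDiff ℝ (n + 1) g) : ContDiff ℝ n (pd i g) :=
  (hg.fderiv_right le_rfl).clm_apply contDiff_const

lemma cont_pd {g : (Fin d → ℝ) → ℝ} (i : Fin d) (hg : ContDiff ℝ 1 g) :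
    Continuous (pd i g) := by
  have hg' : ContDiff ℝ ((0 : ℕ∞) + 1) g := by exact_mod_cast hg
  exact (contDiff_pd i hg').continuous

lemma hcs_pd {g : (Fin d → ℝ) → ℝ} (i : Fin d) (hg : HasCompactSupport g) :
    HasCompactSupport (pd i g) := by
  have h1 : HasCompactSupport (fderiv ℝ g) := hg.fderiv ℝ
  exact h1.comp_left (g := fun L : (Fin d → ℝ) →L[ℝ] ℝ => L (Pi.single i 1)) rfl

lemma tsupport_pd_subset {g : (Fin d → ℝ) → ℝ} (i : Fin d) :
    tsupport (pd i g) ⊆ tsupport g := by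
  apply closure_minimal _ (isClosed_tsupport g)
  intro x hx
  have : fderiv ℝ g x ≠ 0 := by
    intro h; exact hx (by simp [pd, h])
  exact support_fderiv_subset ℝ this

lemma pd_mul {u v : (Fin d → ℝ) → ℝ} (i : Fin d) (x : Fin d → ℝ)
    (hu : DifferentiableAt ℝ u x) (hv : DifferentiableAt ℝ v x) :
    pd i (fun y => u y * v y) x = pd i u x * v x + u x * pd i v x := by
  simp [pd, fderiv_fun_mul hu hv]; ring

lemma pd_fun_add {u v : (Fin d → ℝ) → ℝ} (i : Fin d) (x : Fin d → ℝ)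
    (hu : DifferentiableAt ℝ u x) (hv : DifferentiableAt ℝ v x) :
    pd i (fun y => u y + v y) x = pd i u x + pd i v x := by
  simp [pd, fderiv_fun_add hu hv]

lemma pd_fun_sub {u v : (Fin d → ℝ) → ℝ} (i : Fin d) (x : Fin d → ℝ)
    (hu : DifferentiableAt ℝ u x) (hv : DifferentiableAt ℝ v x) :
    pd i (fun y => u y - v y) x = pd i u x - pd i v x := by
  simp [pd, fderiv_fun_sub hu hv]

lemma pd_fun_sum {ι : Type*} (s : Finset ι) (u : ι → (Fin d → ℝ) → ℝ) (i : Fin d)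
    (x : Fin d → ℝ) (hu : ∀ k ∈ s, DifferentiableAt ℝ (u k) x) :
    pd i (fun y => ∑ k ∈ s, u k y) x = ∑ k ∈ s, pd i (u k) x := by
  simp [pd, fderiv_fun_sum hu]

lemma pd_fun_const_mul {u : (Fin d → ℝ) → ℝ} (c : ℝ) (i : Fin d) (x : Fin d → ℝ)
    (hu : DifferentiableAt ℝ u x) :
    pd i (fun y => c * u y) x = c * pd i u x := by
  simp [pd, fderiv_const_mul hu]

/-- Integration by parts: `∫ u ∂ᵢv = -∫ ∂ᵢu v` when `u` is compactly supported C¹ and v C¹. -/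
lemma ibp {u v : (Fin d → ℝ) → ℝ} (i : Fin d) (hu : ContDiff ℝ 1 u)
    (hv : ContDiff ℝ 1 v) (hcs : HasCompactSupport u) :
    ∫ x, u x * pd i v x = - ∫ x, pd i u x * v x := by
  apply integral_mul_fderiv_eq_neg_fderiv_mul_of_integrable
  · exact (((cont_pd i hu).mul hv.continuous).integrable_of_hasCompactSupport
      (((hcs_pd i hcs)).mul_right))
  · exact ((hu.continuous.mul (cont_pd i hv)).integrable_of_hasCompactSupport
      (hcs.mul_right))
  · exact ((hu.continuous.mul hv.continuous).integrable_of_hasCompactSupport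
      (hcs.mul_right))
  · exact fun x _ => hu.differentiable one_ne_zero x
  · exact fun x _ => hv.differentiable one_ne_zero x

lemma icc {g : (Fin d → ℝ) → ℝ} (hg : Continuous g) (hcs : HasCompactSupport g) :
    Integrable g := hg.integrable_of_hasCompactSupport hcs

lemma hcs_aux {g h : (Fin d → ℝ) → ℝ} (hh : HasCompactSupport h)
    (hz : ∀ x, h x = 0 → g x = 0) : HasCompactSupport g :=
  hh.mono' (fun x hx => subset_closure (fun h0 => hx (hz x h0)))

/-- `∫ q ∂ᵢ(B q) = (1/2) ∫ (∂ᵢB) q²` for compactly supported `q`. -/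
lemma claim2 {q B : (Fin d → ℝ) → ℝ} (i : Fin d) (hq : ContDiff ℝ 1 q)
    (hB : ContDiff ℝ 1 B) (hcs : HasCompactSupport q) :
    ∫ x, q x * pd i (fun y => B y * q y) x = (1/2) * ∫ x, pd i B x * q x ^ 2 := by
  have hBq : ContDiff ℝ 1 (fun y => B y * q y) := hB.mul hq
  have hcsBq : HasCompactSupport (fun y => B y * q y) :=
    hcs_aux hcs (fun x hx => by simp [hx])
  have h1 : ∫ x, q x * pd i (fun y => B y * q y) x
      = - ∫ x, pd i q x * (B x * q x) := ibp i hq hBq hcs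
  have h2 : ∀ x, q x * pd i (fun y => B y * q y) x
      = pd i B x * q x ^ 2 + pd i q x * (B x * q x) := by
    intro x
    rw [pd_mul i x (hB.differentiable one_ne_zero x) (hq.differentiable one_ne_zero x)]
    ring
  have hint1 : Integrable (fun x => pd i B x * q x ^ 2) :=
    icc ((cont_pd i hB).mul (hq.continuous.pow 2))
      (hcs_aux hcs (fun x hx => by simp [hx]))
  have hint2 : Integrable (fun x => pd i q x * (B x * q x)) :=
    icc ((cont_pd i hq).mul (hB.continuous.mul hq.continuous))
      (hcs_aux hcs (fun x hx => by simp [hx]))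
  have h3 : ∫ x, q x * pd i (fun y => B y * q y) x
      = (∫ x, pd i B x * q x ^ 2) + ∫ x, pd i q x * (B x * q x) := by
    rw [show (fun x => q x * pd i (fun y => B y * q y) x)
        = fun x => pd i B x * q x ^ 2 + pd i q x * (B x * q x) from funext h2]
    exact integral_add hint1 hint2
  linarith [h1, h3]

lemma contDiff_pd_one {g : (Fin d → ℝ) → ℝ} (i : Fin d) (hg : ContDiff ℝ 2 g) :
    ContDiff ℝ 1 (pd i g) := by
  have hg' : ContDiff ℝ ((1 : ℕ∞) + 1) g := by exact_mod_cast hg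
  exact_mod_cast contDiff_pd i hg'


section main
variable {q : (Fin d → ℝ) → ℝ} {f : (Fin d → ℝ) → Fin d → ℝ}
  {D : (Fin d → ℝ) → Fin d → Fin d → ℝ}

lemma stepA (hq : ContDiff ℝ 2 q) (hf : ContDiff ℝ 1 f) (hD : ContDiff ℝ 2 D)
    (x : Fin d → ℝ) :
    fokkerPlanck f D q x = (∑ i, pd i (fun y => bvec f D y i * q y) x)
      + (1/2) * ∑ i, ∑ j, pd i (fun y => D y i j * pd j q y) x := by
  have hq1 : ContDiff ℝ 1 q := hq.of_le (by norm_num)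
  have hDij : ∀ i j, ContDiff ℝ 2 (fun y => D y i j) := fun i j =>
    contDiff_pi.mp (contDiff_pi.mp hD i) j
  have hfi : ∀ i, ContDiff ℝ 1 (fun y => f y i) := fun i => contDiff_pi.mp hf i
  have hpdD : ∀ i j k, ContDiff ℝ 1 (pd k (fun y => D y i j)) := fun i j k =>
    contDiff_pd_one k (hDij i j)
  -- key: split the second-order term
  have key : ∀ i j, pd i (pd j (fun y => D y i j * q y)) x
      = pd i (fun y => pd j (fun z => D z i j) y * q y) x
        + pd i (fun y => D y i j * pd j q y) x := by
    intro i j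
    have hfe : pd j (fun y => D y i j * q y)
        = fun y => pd j (fun z => D z i j) y * q y + D y i j * pd j q y := by
      funext y
      exact pd_mul j y ((hDij i j).differentiable (by norm_num) y)
        (hq1.differentiable one_ne_zero y)
    rw [hfe]
    exact pd_fun_add i x
      (((hpdD i j j).mul hq1).differentiable one_ne_zero x)
      (((hDij i j).of_le (by norm_num)|>.mul (contDiff_pd_one j hq)).differentiable one_ne_zero x)
  -- expand the bvec term
  have bexp : ∀ i, pd i (fun y => bvec f D y i * q y) x
      = (1/2) * ∑ j, pd i (fun y => pd j (fun z => D z i j) y * q y) x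
        - pd i (fun y => f y i * q y) x := by
    intro i
    have hfe : (fun y => bvec f D y i * q y)
        = fun y => (1/2) * (∑ j, pd j (fun z => D z i j) y * q y) - f y i * q y := by
      funext y
      simp only [bvec, sub_mul, mul_assoc, Finset.sum_mul]
    rw [hfe]
    have hdsum : DifferentiableAt ℝ
        (fun y => ∑ j, pd j (fun z => D z i j) y * q y) x :=
      DifferentiableAt.fun_sum (fun j _ =>
        ((hpdD i j j).mul hq1).differentiable one_ne_zero x)
    rw [pd_fun_sub i x (hdsum.const_mul _)
      (((hfi i).mul hq1).differentiable one_ne_zero x)]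
    rw [pd_fun_const_mul _ i x hdsum]
    rw [pd_fun_sum Finset.univ _ i x (fun j _ =>
      ((hpdD i j j).mul hq1).differentiable one_ne_zero x)]
  simp only [fokkerPlanck, key, bexp, Finset.sum_add_distrib, Finset.sum_sub_distrib,
    ← Finset.mul_sum]
  ring

lemma hbC1 (hf : ContDiff ℝ 1 f) (hD : ContDiff ℝ 2 D) (i : Fin d) :
    ContDiff ℝ 1 (fun y => bvec f D y i) := by
  simp only [bvec]
  exact (contDiff_const.mul (ContDiff.sum (fun j _ =>
    contDiff_pd_one j (contDiff_pi.mp (contDiff_pi.mp hD i) j)))).sub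
    (contDiff_pi.mp hf i)

lemma stepB (hq : ContDiff ℝ 2 q) (hf : ContDiff ℝ 1 f) (hD : ContDiff ℝ 2 D)
    (hcs : HasCompactSupport q) :
    ∫ x, q x * fokkerPlanck f D q x
      = (1/2) * (∫ x, divb f D x * q x ^ 2)
        - (1/2) * ∑ i, ∑ j, ∫ x, pd i q x * (D x i j * pd j q x) := by
  have hq1 : ContDiff ℝ 1 q := hq.of_le (by norm_num)
  have hDij : ∀ i j, ContDiff ℝ 2 (fun y => D y i j) := fun i j =>
    contDiff_pi.mp (contDiff_pi.mp hD i) j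
  have hb : ∀ i, ContDiff ℝ 1 (fun y => bvec f D y i) := hbC1 hf hD
  have hv : ∀ i j, ContDiff ℝ 1 (fun y => D y i j * pd j q y) := fun i j =>
    ((hDij i j).of_le (by norm_num)).mul (contDiff_pd_one j hq)
  -- pointwise split
  have hsplit : (fun x => q x * fokkerPlanck f D q x)
      = fun x => (∑ i, q x * pd i (fun y => bvec f D y i * q y) x)
        + (1/2) * ∑ i, ∑ j, q x * pd i (fun y => D y i j * pd j q y) x := by
    funext x
    rw [stepA hq hf hD x]
    simp only [Finset.mul_sum, mul_add, mul_left_comm]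
  have hint1 : ∀ i, Integrable (fun x => q x * pd i (fun y => bvec f D y i * q y) x) :=
    fun i => icc (hq1.continuous.mul (cont_pd i ((hb i).mul hq1)))
      (hcs_aux hcs (fun x hx => by simp [hx]))
  have hint2 : ∀ i j, Integrable (fun x => q x * pd i (fun y => D y i j * pd j q y) x) :=
    fun i j => icc (hq1.continuous.mul (cont_pd i (hv i j)))
      (hcs_aux hcs (fun x hx => by simp [hx]))
  rw [hsplit, integral_add (integrable_finset_sum _ (fun i _ => hint1 i))
    (((integrable_finset_sum _ (fun i _ => integrable_finset_sum _
      (fun j _ => hint2 i j)))).const_mul _),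
    integral_finset_sum _ (fun i _ => hint1 i), integral_const_mul,
    integral_finset_sum _ (fun i _ => integrable_finset_sum _ (fun j _ => hint2 i j))]
  have e1 : ∀ i, ∫ x, q x * pd i (fun y => bvec f D y i * q y) x
      = (1/2) * ∫ x, pd i (fun y => bvec f D y i) x * q x ^ 2 :=
    fun i => claim2 i hq1 (hb i) hcs
  have e2 : ∀ i j, ∫ x, q x * pd i (fun y => D y i j * pd j q y) x
      = - ∫ x, pd i q x * (D x i j * pd j q x) := by
    intro i j
    rw [ibp i hq1 (hv i j) hcs]
  simp only [e1]
  have e3 : ∀ i j, (∫ x, ∑ j', q x * pd i (fun y => D y i j' * pd j q y) x) = 0 → True :=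
    fun _ _ _ => trivial
  have e4 : ∀ i, (∫ x, ∑ j, q x * pd i (fun y => D y i j * pd j q y) x)
      = ∑ j, ∫ x, q x * pd i (fun y => D y i j * pd j q y) x :=
    fun i => integral_finset_sum _ (fun j _ => hint2 i j)
  simp only [e4, e2]
  -- now handle the divb part
  have e5 : ∑ i, (1/2) * ∫ x, pd i (fun y => bvec f D y i) x * q x ^ 2
      = (1/2) * ∫ x, divb f D x * q x ^ 2 := by
    rw [← Finset.mul_sum]
    congr 1
    rw [← integral_finset_sum _ (fun i _ => (show Integrable
      (fun x => pd i (fun y => bvec f D y i) x * q x ^ 2) from icc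
      ((cont_pd i (hb i)).mul (hq1.continuous.pow 2))
      (hcs_aux hcs (fun x hx => by simp [hx]))))]
    congr 1
    funext x
    simp only [divb, Finset.sum_mul]
  rw [e5]
  simp only [Finset.sum_neg_distrib]
  ring

lemma pd_zero_outside {g : (Fin d → ℝ) → ℝ} (i : Fin d) {x : Fin d → ℝ}
    (hx : x ∉ tsupport g) : pd i g x = 0 := by
  by_contra h
  exact hx (tsupport_pd_subset i (subset_closure (by simpa using h)))

lemma hcs_aux2 {g h : (Fin d → ℝ) → ℝ} (hh : HasCompactSupport h)
    (hz : ∀ x ∉ tsupport h, g x = 0) : HasCompactSupport g :=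
  hh.mono' (fun x hx => by by_contra h'; exact hx (hz x h'))

lemma tsupport_mul_q {a : (Fin d → ℝ) → ℝ} :
    tsupport (fun y => a y * q y) ⊆ tsupport q := by
  apply closure_minimal _ (isClosed_tsupport q)
  intro y hy
  apply subset_closure
  intro h0
  exact hy (by simp [Function.mem_support] at *; simp [h0])

lemma fp_zero_outside (x : Fin d → ℝ) (hx : x ∉ tsupport q) :
    fokkerPlanck f D q x = 0 := by
  have h1 : ∀ i, pd i (fun y => f y i * q y) x = 0 := fun i =>
    pd_zero_outside i (fun h => hx (tsupport_mul_q h))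
  have h2 : ∀ i j, pd i (pd j (fun y => D y i j * q y)) x = 0 := by
    intro i j
    apply pd_zero_outside i
    intro h
    exact hx (tsupport_mul_q (tsupport_pd_subset j h))
  simp [fokkerPlanck, h1, h2]

end main


set_option maxHeartbeats 2000000 in
/-- Stability of the steady-state Fokker-Planck operator:
`C₀² ∫_Ω q² ≤ 4 ∫_Ω (ℒq)²`. -/
theorem stmt_0 {d : ℕ} (hd : 1 ≤ d)
    (Ω : Set (Fin d → ℝ)) (hΩopen : IsOpen Ω) (hΩbdd : Bornology.IsBounded Ω)
    (q : (Fin d → ℝ) → ℝ) (hq : ContDiff ℝ 2 q)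
    (hqsupp : HasCompactSupport q) (hqΩ : tsupport q ⊆ Ω)
    (f : (Fin d → ℝ) → Fin d → ℝ) (hf : ContDiff ℝ 1 f)
    (D : (Fin d → ℝ) → Fin d → Fin d → ℝ) (hD : ContDiff ℝ 2 D)
    (C_D : ℝ) (hCD : 0 < C_D)
    (hell : ∀ x ∈ Ω, ∀ ξ : Fin d → ℝ,
      C_D * ∑ i, (ξ i) ^ 2 ≤ ∑ i, ∑ j, D x i j * ξ i * ξ j)
    (C_P : ℝ) (hCP : 0 < C_P)
    (hpoincare : ∀ u : (Fin d → ℝ) → ℝ, ContDiff ℝ 1 u → HasCompactSupport u →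
      tsupport u ⊆ Ω → ∫ x in Ω, (u x) ^ 2 ≤ C_P * ∫ x in Ω, ∑ i, (pd i u x) ^ 2)
    (C₀ : ℝ) (hC0 : 0 < C₀)
    (hgap : ∀ x ∈ Ω, C₀ ≤ C_D / C_P - divb f D x) :
    C₀ ^ 2 * ∫ x in Ω, (q x) ^ 2 ≤ 4 * ∫ x in Ω, (fokkerPlanck f D q x) ^ 2 := by
  set L := fokkerPlanck f D q with hLdef
  have hq1 : ContDiff ℝ 1 q := hq.of_le (by norm_num)
  have hDij : ∀ i j, ContDiff ℝ 2 (fun y => D y i j) := fun i j =>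
    contDiff_pi.mp (contDiff_pi.mp hD i) j
  have hfi : ∀ i, ContDiff ℝ 1 (fun y => f y i) := fun i => contDiff_pi.mp hf i
  have hb : ∀ i, ContDiff ℝ 1 (fun y => bvec f D y i) := hbC1 hf hD
  have hout : ∀ x, x ∉ Ω → x ∉ tsupport q := fun x hx h => hx (hqΩ h)
  have q0 : ∀ x, x ∉ tsupport q → q x = 0 := fun x hx =>
    image_eq_zero_of_notMem_tsupport hx
  -- continuity of L
  have hLcont : Continuous L := by
    rw [hLdef]
    unfold fokkerPlanck
    apply Continuous.add
    · exact (continuous_finset_sum _ (fun i _ =>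
        cont_pd i ((hfi i).mul hq1))).neg
    · exact continuous_const.mul (continuous_finset_sum _ (fun i _ =>
        continuous_finset_sum _ (fun j _ =>
          cont_pd i (contDiff_pd_one j ((hDij i j).mul hq)))))
  have hLcs : HasCompactSupport L :=
    hcs_aux2 hqsupp (fun x hx => fp_zero_outside x hx)
  -- global integrability facts
  have IqInt : Integrable (fun x => q x ^ 2) :=
    icc (hq1.continuous.pow 2) (hcs_aux hqsupp (fun x hx => by simp [hx]))
  have IqLInt : Integrable (fun x => q x * L x) :=
    icc (hq1.continuous.mul hLcont) (hcs_aux hqsupp (fun x hx => by simp [hx]))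
  have ILInt : Integrable (fun x => L x ^ 2) :=
    icc (hLcont.pow 2) (hcs_aux2 hqsupp (fun x hx => by
      simp [hLdef, fp_zero_outside x hx]))
  have hdivbcont : Continuous (divb f D) := by
    unfold divb
    exact continuous_finset_sum _ (fun i _ => cont_pd i (hb i))
  have AInt : Integrable (fun x => divb f D x * q x ^ 2) :=
    icc (hdivbcont.mul (hq1.continuous.pow 2))
      (hcs_aux hqsupp (fun x hx => by simp [hx]))
  have hDtermcont : ∀ i j, Continuous (fun x => pd i q x * (D x i j * pd j q x)) :=
    fun i j => (cont_pd i hq1).mul (((hDij i j).continuous).mul (cont_pd j hq1))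
  have DtermInt : ∀ i j, Integrable (fun x => pd i q x * (D x i j * pd j q x)) :=
    fun i j => icc (hDtermcont i j)
      (hcs_aux2 hqsupp (fun x hx => by simp [pd_zero_outside i hx]))
  have BInt : Integrable (fun x => ∑ i, ∑ j, pd i q x * (D x i j * pd j q x)) :=
    integrable_finset_sum _ (fun i _ => integrable_finset_sum _ (fun j _ => DtermInt i j))
  have GInt : Integrable (fun x => ∑ i, (pd i q x) ^ 2) :=
    integrable_finset_sum _ (fun i _ => icc ((cont_pd i hq1).pow 2)
      (hcs_aux2 hqsupp (fun x hx => by simp [pd_zero_outside i hx])))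
  -- set-integral conversions
  have hIq : ∫ x in Ω, q x ^ 2 = ∫ x, q x ^ 2 :=
    setIntegral_eq_integral_of_forall_compl_eq_zero
      (fun x hx => by simp [q0 x (hout x hx)])
  have hJ : ∫ x in Ω, q x * L x = ∫ x, q x * L x :=
    setIntegral_eq_integral_of_forall_compl_eq_zero
      (fun x hx => by simp [q0 x (hout x hx)])
  have hA : ∫ x in Ω, divb f D x * q x ^ 2 = ∫ x, divb f D x * q x ^ 2 :=
    setIntegral_eq_integral_of_forall_compl_eq_zero
      (fun x hx => by simp [q0 x (hout x hx)])
  have hB : ∫ x in Ω, (∑ i, ∑ j, pd i q x * (D x i j * pd j q x))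
      = ∫ x, ∑ i, ∑ j, pd i q x * (D x i j * pd j q x) :=
    setIntegral_eq_integral_of_forall_compl_eq_zero
      (fun x hx => by
        apply Finset.sum_eq_zero; intro i _
        apply Finset.sum_eq_zero; intro j _
        simp [pd_zero_outside i (hout x hx)])
  set Iq := ∫ x in Ω, q x ^ 2 with hIqdef
  set IL := ∫ x in Ω, L x ^ 2 with hILdef
  set J := ∫ x in Ω, q x * L x with hJdef
  set A := ∫ x in Ω, divb f D x * q x ^ 2 with hAdef
  set B := ∫ x in Ω, (∑ i, ∑ j, pd i q x * (D x i j * pd j q x)) with hBdef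
  set G := ∫ x in Ω, ∑ i, (pd i q x) ^ 2 with hGdef
  -- F1 : J = (1/2) A - (1/2) B
  have F1 : J = (1/2) * A - (1/2) * B := by
    rw [hJ, hA, hB, hLdef, stepB hq hf hD hqsupp]
    congr 1
    congr 1
    rw [integral_finset_sum _ (fun i _ =>
      integrable_finset_sum _ (fun j _ => DtermInt i j))]
    exact Finset.sum_congr rfl (fun i _ =>
      (integral_finset_sum _ (fun j _ => DtermInt i j)).symm)
  -- F2 : C_D * G ≤ B
  have F2 : C_D * G ≤ B := by
    have h := setIntegral_mono_on (s := Ω)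
      (f := fun x => C_D * ∑ i, (pd i q x) ^ 2)
      (g := fun x => ∑ i, ∑ j, pd i q x * (D x i j * pd j q x))
      ((GInt.const_mul C_D).integrableOn) (BInt.integrableOn)
      hΩopen.measurableSet
      (fun x hx => by
        refine (hell x hx (fun i => pd i q x)).trans_eq ?_
        exact Finset.sum_congr rfl (fun i _ =>
          Finset.sum_congr rfl (fun j _ => by ring)))
    rwa [integral_const_mul] at h
  -- F3 : Iq ≤ C_P * G
  have F3 : Iq ≤ C_P * G := hpoincare q hq1 hqsupp hqΩ
  -- F4 : C₀ * Iq ≤ (C_D / C_P) * Iq - A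
  have F4 : C₀ * Iq ≤ (C_D / C_P) * Iq - A := by
    have h := setIntegral_mono_on (s := Ω)
      (f := fun x => C₀ * q x ^ 2)
      (g := fun x => (C_D / C_P - divb f D x) * q x ^ 2)
      ((IqInt.const_mul C₀).integrableOn)
      (((IqInt.const_mul (C_D / C_P)).sub AInt).integrableOn.congr_fun
        (fun x _ => by simp only [Pi.sub_apply]; ring) hΩopen.measurableSet)
      hΩopen.measurableSet
      (fun x hx => mul_le_mul_of_nonneg_right (hgap x hx) (sq_nonneg _))
    rw [integral_const_mul] at h
    have h2 : (∫ x in Ω, (C_D / C_P - divb f D x) * q x ^ 2)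
        = (C_D / C_P) * Iq - A := by
      have : (fun x => (C_D / C_P - divb f D x) * q x ^ 2)
          = fun x => (C_D / C_P) * q x ^ 2 - divb f D x * q x ^ 2 :=
        funext (fun x => by ring)
      rw [this, integral_sub ((IqInt.const_mul (C_D / C_P)).integrableOn)
        (AInt.integrableOn), integral_const_mul]
    linarith [h, h2.symm.trans_le (le_refl _), h2 ▸ h]
  -- F5 : -J ≤ (C₀/4) * Iq + (1/C₀) * IL
  have F5 : -J ≤ (C₀/4) * Iq + (1/C₀) * IL := by
    have h := setIntegral_mono_on (s := Ω)
      (f := fun x => -(q x * L x))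
      (g := fun x => (C₀/4) * q x ^ 2 + (1/C₀) * L x ^ 2)
      (IqLInt.neg.integrableOn)
      ((icc ((continuous_const.mul (hq1.continuous.pow 2)).add
          (continuous_const.mul (hLcont.pow 2)))
        (hcs_aux2 hqsupp (fun x hx => by
          simp [q0 x hx, hLdef, fp_zero_outside x hx]))).integrableOn)
      hΩopen.measurableSet
      (fun x hx => by
        have heq : (C₀/4) * q x ^ 2 + (1/C₀) * L x ^ 2 + q x * L x
            = (C₀ * q x + 2 * L x) ^ 2 / (4 * C₀) := by
          field_simp
          ring
        have hnn : (0:ℝ) ≤ (C₀ * q x + 2 * L x) ^ 2 / (4 * C₀) :=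
          div_nonneg (sq_nonneg _) (by linarith)
        linarith [heq, hnn])
    rw [integral_neg] at h
    rw [integral_add ((IqInt.const_mul (C₀/4)).integrableOn)
      ((ILInt.const_mul (1/C₀)).integrableOn), integral_const_mul,
      integral_const_mul] at h
    exact h
  -- combine
  have hIqnn : 0 ≤ Iq := setIntegral_nonneg hΩopen.measurableSet
    (fun x _ => sq_nonneg _)
  have hILnn : 0 ≤ IL := setIntegral_nonneg hΩopen.measurableSet
    (fun x _ => sq_nonneg _)
  have hGge : Iq / C_P ≤ G := by
    rw [div_le_iff₀ hCP]; linarith [F3]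
  have hBge : (C_D / C_P) * Iq ≤ B := by
    calc (C_D / C_P) * Iq = C_D * (Iq / C_P) := by ring
    _ ≤ C_D * G := by nlinarith [hGge]
    _ ≤ B := F2
  have hJle : (C₀/2) * Iq ≤ -J := by
    have : -J = (1/2) * B - (1/2) * A := by rw [F1]; ring
    linarith [hBge, F4]
  have key : (C₀/4) * Iq ≤ (1/C₀) * IL := by linarith [hJle, F5]
  have : C₀ * ((C₀/4) * Iq) ≤ C₀ * ((1/C₀) * IL) :=
    mul_le_mul_of_nonneg_left key (le_of_lt hC0)
  have hCinv : C₀ * ((1/C₀) * IL) = IL := by field_simp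
  rw [hCinv] at this
  nlinarith [this]
end

section
/- Let d ≥ 1 and let p : ℝ^d → ℝ be a continuous integrable function whose Fourier transform is integrable. Then for every x ∈ ℝ^d, lim_{R→∞} (2π)^{−d} ∫_{ℝ^d} ( ∫_{[-R,R]^d} cos( z·(x − y) ) dz ) p(y) dy = p(x). -/
open MeasureTheory Filter

section Aux

open Real FourierTransform
open scoped RealInnerProductSpace

lemma limit_step {d : ℕ} (h : (Fin d → ℝ) → ℂ) (hh : Integrable h) :
    Tendsto (fun R : ℝ => ∫ z in Set.univ.pi fun _ : Fin d => Set.Icc (-R) R, h z)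
      atTop (nhds (∫ z, h z)) := by
  have hms : ∀ R : ℝ, MeasurableSet (Set.univ.pi fun _ : Fin d => Set.Icc (-R) R) :=
    fun R => MeasurableSet.univ_pi fun _ => measurableSet_Icc
  have heq : ∀ R : ℝ, (∫ z in Set.univ.pi fun _ : Fin d => Set.Icc (-R) R, h z)
      = ∫ z, (Set.univ.pi fun _ : Fin d => Set.Icc (-R) R).indicator h z := by
    intro R; rw [integral_indicator (hms R)]
  simp only [heq]
  apply tendsto_integral_filter_of_dominated_convergence (fun z => ‖h z‖)
  · exact Filter.Eventually.of_forall fun R => hh.aestronglyMeasurable.indicator (hms R)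
  · exact Filter.Eventually.of_forall fun R =>
      Filter.Eventually.of_forall fun z => norm_indicator_le_norm_self h z
  · exact hh.norm
  · refine Filter.Eventually.of_forall fun z => ?_
    have hev : ∀ᶠ R : ℝ in atTop,
        (Set.univ.pi fun _ : Fin d => Set.Icc (-R) R).indicator h z = h z := by
      filter_upwards [eventually_ge_atTop (∑ j, |z j|)] with R hR
      apply Set.indicator_of_mem
      rw [Set.mem_univ_pi]
      intro j
      have h1 : |z j| ≤ ∑ i, |z i| :=
        Finset.single_le_sum (fun i _ => abs_nonneg (z i)) (Finset.mem_univ j)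
      have h2 : |z j| ≤ R := le_trans h1 hR
      rw [Set.mem_Icc]
      constructor <;> [linarith [neg_abs_le (z j)]; linarith [le_abs_self (z j)]]
    exact Tendsto.congr' (by filter_upwards [hev] with R hR using hR.symm) tendsto_const_nhds

lemma inv_step {d : ℕ}
    (p : (Fin d → ℝ) → ℝ) (hpc : Continuous p) (hpi : Integrable p)
    (g : (Fin d → ℝ) → ℂ)
    (hg : ∀ ξ, g ξ = ∫ y : Fin d → ℝ, Complex.exp (-Complex.I * (∑ j, ξ j * y j)) * (p y : ℂ))
    (hgi : Integrable g) (x : Fin d → ℝ) :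
    ∫ u : Fin d → ℝ, Complex.exp (Complex.I * ((∑ j, u j * x j : ℝ) : ℂ)) * g u
      = ((2 * π) ^ d : ℝ) * (p x : ℂ) := by
  set e := (MeasurableEquiv.toLp 2 (Fin d → ℝ)).symm with he
  have hmp := EuclideanSpace.volume_preserving_symm_measurableEquiv_toLp (Fin d)
  have hemb := MeasurableEquiv.measurableEmbedding e
  set q : EuclideanSpace ℝ (Fin d) → ℂ := fun y => (p (e y) : ℂ) with hq
  have hqc : Continuous q := Complex.continuous_ofReal.comp (hpc.comp (PiLp.continuous_ofLp 2 _))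
  have hqi : Integrable q := (hmp.integrable_comp_emb hemb).2 hpi.ofReal
  -- Fourier transform of q
  have hFq : ∀ w, 𝓕 q w = g (fun j => 2 * π * w j) := by
    intro w
    rw [Real.fourier_eq', hg]
    rw [← hmp.integral_comp hemb
      (fun y : Fin d → ℝ => Complex.exp (-Complex.I * (∑ j, (2 * π * w j : ℝ) * y j)) * (p y : ℂ))]
    congr 1; ext v
    rw [smul_eq_mul]
    congr 2
    have : ⟪v, w⟫ = ∑ j, v j * w j := by
      simp [PiLp.inner_apply, RCLike.inner_apply, conj_trivial, mul_comm]
    rw [this]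
    push_cast
    simp only [Finset.mul_sum, Finset.sum_mul, neg_mul, mul_neg, neg_inj,
      show ∀ j, e v j = v j from fun _ => rfl,
      show ∀ j, (MeasurableEquiv.toLp 2 (Fin d → ℝ)).symm v j = v j from fun _ => rfl]
    exact Finset.sum_congr rfl fun j _ => by ring
  -- integrability of 𝓕 q
  have hGi : Integrable (fun w : EuclideanSpace ℝ (Fin d) => g (e w)) :=
    (hmp.integrable_comp_emb hemb).2 hgi
  have hFqi : Integrable (𝓕 q) := by
    have : (𝓕 q) = fun w : EuclideanSpace ℝ (Fin d) =>
        (fun u : EuclideanSpace ℝ (Fin d) => g (e u)) ((2 * π) • w) := by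
      funext w; exact hFq w
    rw [this]
    exact (integrable_comp_smul_iff volume _ (by positivity : (2 * π : ℝ) ≠ 0)).2 hGi
  -- inversion
  set x' : EuclideanSpace ℝ (Fin d) := e.symm x with hx'
  have hex' : ∀ j, x' j = x j := fun j => rfl
  have hinv : 𝓕⁻ (𝓕 q) x' = q x' := hqi.fourierInv_fourier_eq hFqi hqc.continuousAt
  set F : EuclideanSpace ℝ (Fin d) → ℂ :=
    fun u => Complex.exp (Complex.I * ((∑ j, u j * x j : ℝ) : ℂ)) * g (e u) with hF
  have key : 𝓕⁻ (𝓕 q) x' = ∫ w : EuclideanSpace ℝ (Fin d), F ((2 * π) • w) := by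
    rw [Real.fourierInv_eq']
    congr 1; ext w
    rw [hFq w, smul_eq_mul]
    have h1 : ⟪w, x'⟫ = ∑ j, w j * x j := by
      simp [PiLp.inner_apply, RCLike.inner_apply, conj_trivial, hex', mul_comm]
    have h2 : (fun j => 2 * π * w j) = e ((2 * π) • w) := rfl
    rw [h1, h2]
    congr 1
    push_cast
    simp only [Finset.mul_sum, Finset.sum_mul,
      show ∀ i, ((2 * π) • w) i = 2 * π * w i from fun _ => rfl]
    push_cast
    refine congrArg Complex.exp ?_
    exact Finset.sum_congr rfl fun j _ => by ring
  have hsmul : ∫ w : EuclideanSpace ℝ (Fin d), F ((2 * π) • w)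
      = |(((2 * π : ℝ)) ^ (Module.finrank ℝ (EuclideanSpace ℝ (Fin d))))⁻¹| • ∫ u, F u :=
    MeasureTheory.Measure.integral_comp_smul volume F (2 * π)
  have hrank : Module.finrank ℝ (EuclideanSpace ℝ (Fin d)) = d := by simp
  have htrans : ∫ u, F u = ∫ u : Fin d → ℝ, Complex.exp (Complex.I * ((∑ j, u j * x j : ℝ) : ℂ)) * g u :=
    hmp.integral_comp hemb (fun u : Fin d → ℝ => Complex.exp (Complex.I * ((∑ j, u j * x j : ℝ) : ℂ)) * g u)
  have habs : |(((2 * π : ℝ)) ^ d)⁻¹| = ((2 * π : ℝ) ^ d)⁻¹ := by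
    rw [abs_of_nonneg]; positivity
  have hqx : q x' = (p x : ℂ) := by
    simp [hq, hx']
  rw [key, hsmul, hrank, habs, htrans, hqx] at hinv
  rw [← hinv, Complex.real_smul, ← mul_assoc, ← Complex.ofReal_mul,
    mul_inv_cancel₀ (by positivity : ((2 * π : ℝ) ^ d) ≠ 0), Complex.ofReal_one, one_mul]

lemma norm_exp_I_mul (t : ℝ) : ‖Complex.exp (Complex.I * t)‖ = 1 := by
  simp [Complex.norm_exp]

lemma norm_exp_neg_I_mul (t : ℝ) : ‖Complex.exp (-Complex.I * t)‖ = 1 := by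
  simp [Complex.norm_exp]

lemma fubini_step {d : ℕ} (p : (Fin d → ℝ) → ℝ) (hpc : Continuous p) (hpi : Integrable p)
    (g : (Fin d → ℝ) → ℂ)
    (hg : ∀ ξ, g ξ = ∫ y : Fin d → ℝ, Complex.exp (-Complex.I * (∑ j, ξ j * y j)) * (p y : ℂ))
    (x : Fin d → ℝ) (R : ℝ) :
    ∫ y : Fin d → ℝ,
        (∫ z in Set.univ.pi fun _ : Fin d => Set.Icc (-R) R,
          Real.cos (∑ j, z j * (x j - y j))) * p y
      = (∫ z in Set.univ.pi fun _ : Fin d => Set.Icc (-R) R,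
          Complex.exp (Complex.I * ((∑ j, z j * x j : ℝ) : ℂ)) * g z).re := by
  set cube : Set (Fin d → ℝ) := Set.univ.pi fun _ : Fin d => Set.Icc (-R) R with hcube
  have hcomp : IsCompact cube := isCompact_univ_pi fun _ => isCompact_Icc
  set μ : Measure (Fin d → ℝ) := volume.restrict cube with hμ
  haveI : IsFiniteMeasure μ := by
    constructor
    rw [hμ, Measure.restrict_apply_univ]
    exact hcomp.measure_lt_top
  set Φ : (Fin d → ℝ) × (Fin d → ℝ) → ℂ := fun zy =>
    (Complex.exp (Complex.I * ((∑ j, zy.1 j * x j : ℝ) : ℂ)) *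
      Complex.exp (-Complex.I * ((∑ j, zy.1 j * zy.2 j : ℝ) : ℂ))) * (p zy.2 : ℂ) with hΦ
  have hsum1 : Continuous fun zy : (Fin d → ℝ) × (Fin d → ℝ) => (∑ j, zy.1 j * x j : ℝ) := by
    apply continuous_finset_sum; intro j _; fun_prop
  have hsum2 : Continuous fun zy : (Fin d → ℝ) × (Fin d → ℝ) => (∑ j, zy.1 j * zy.2 j : ℝ) := by
    apply continuous_finset_sum; intro j _; fun_prop
  have hΦc : Continuous Φ := by
    apply Continuous.mul
    · exact ((Complex.continuous_exp.comp (continuous_const.mul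
        (Complex.continuous_ofReal.comp hsum1)))).mul
        (Complex.continuous_exp.comp (continuous_const.mul
        (Complex.continuous_ofReal.comp hsum2)))
    · fun_prop
  have hnorm : ∀ zy, ‖Φ zy‖ = ‖p zy.2‖ := by
    intro zy
    rw [hΦ]
    simp only [norm_mul, norm_exp_I_mul, norm_exp_neg_I_mul, Complex.norm_real]
    ring
  -- integrability on the product
  have hΦi : Integrable Φ (μ.prod volume) := by
    rw [integrable_prod_iff hΦc.aestronglyMeasurable]
    constructor
    · refine Filter.Eventually.of_forall fun z => ?_
      have : (fun y => Φ (z, y)) = fun y =>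
          (Complex.exp (Complex.I * ((∑ j, z j * x j : ℝ) : ℂ)) *
            Complex.exp (-Complex.I * ((∑ j, z j * y j : ℝ) : ℂ))) * (p y : ℂ) := rfl
      rw [this]
      refine Integrable.bdd_mul (c := 1) hpi.ofReal ?_ (Filter.Eventually.of_forall fun y => ?_)
      · exact (Continuous.aestronglyMeasurable (by
          exact (Complex.continuous_exp.comp (continuous_const.mul
            (Complex.continuous_ofReal.comp (by fun_prop)))).mul
            (Complex.continuous_exp.comp (continuous_const.mul
            (Complex.continuous_ofReal.comp (by
              apply continuous_finset_sum; intro j _; fun_prop))))))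
      · rw [norm_mul, norm_exp_I_mul, norm_exp_neg_I_mul]; norm_num
    · have : (fun z => ∫ y, ‖Φ (z, y)‖) = fun _ => ∫ y, ‖p y‖ := by
        funext z
        exact integral_congr_ae (Filter.Eventually.of_forall fun y => hnorm (z, y))
      rw [this]
      exact integrable_const _
  have key1 : ∀ y : Fin d → ℝ,
      (∫ z in cube, Real.cos (∑ j, z j * (x j - y j))) * p y = (∫ z, Φ (z, y) ∂μ).re := by
    intro y
    have hcont : Continuous fun z : Fin d → ℝ =>
        Complex.exp (Complex.I * ((∑ j, z j * x j : ℝ) : ℂ)) *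
          Complex.exp (-Complex.I * ((∑ j, z j * y j : ℝ) : ℂ)) := by
      exact (Complex.continuous_exp.comp (continuous_const.mul
        (Complex.continuous_ofReal.comp (by apply continuous_finset_sum; intro j _; fun_prop)))).mul
        (Complex.continuous_exp.comp (continuous_const.mul
        (Complex.continuous_ofReal.comp (by apply continuous_finset_sum; intro j _; fun_prop))))
    have hint : Integrable (fun z : Fin d → ℝ =>
        Complex.exp (Complex.I * ((∑ j, z j * x j : ℝ) : ℂ)) *
          Complex.exp (-Complex.I * ((∑ j, z j * y j : ℝ) : ℂ))) μ :=
      hcont.locallyIntegrable.integrableOn_isCompact hcomp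
    have h1 : ∫ z, Φ (z, y) ∂μ
        = (∫ z, Complex.exp (Complex.I * ((∑ j, z j * x j : ℝ) : ℂ)) *
            Complex.exp (-Complex.I * ((∑ j, z j * y j : ℝ) : ℂ)) ∂μ) * (p y : ℂ) := by
      simp only [hΦ]
      exact integral_mul_const _ _
    rw [h1, mul_comm _ ((p y : ℂ)), Complex.re_ofReal_mul, mul_comm]
    congr 1
    rw [← RCLike.re_eq_complex_re, ← integral_re hint]
    refine integral_congr_ae (Filter.Eventually.of_forall fun z => ?_)
    beta_reduce
    rw [RCLike.re_eq_complex_re]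
    have hcomb : Complex.exp (Complex.I * ((∑ j, z j * x j : ℝ) : ℂ)) *
        Complex.exp (-Complex.I * ((∑ j, z j * y j : ℝ) : ℂ))
        = Complex.exp (((∑ j, z j * (x j - y j) : ℝ) : ℂ) * Complex.I) := by
      rw [← Complex.exp_add]
      congr 1
      have : (∑ j, z j * (x j - y j)) = (∑ j, z j * x j) - (∑ j, z j * y j) := by
        rw [← Finset.sum_sub_distrib]
        exact Finset.sum_congr rfl fun j _ => by ring
      rw [this]
      push_cast
      ring
    rw [hcomb, Complex.exp_ofReal_mul_I_re]
  have key2 := integral_re (μ := (volume : Measure (Fin d → ℝ)))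
    (hΦi.integral_prod_right)
  have key3 : (∫ z, ∫ y, Φ (z, y) ∂volume ∂μ) = ∫ y, ∫ z, Φ (z, y) ∂μ ∂volume :=
    integral_integral_swap (by exact hΦi)
  have key4 : ∀ z : Fin d → ℝ, (∫ y, Φ (z, y)) =
      Complex.exp (Complex.I * ((∑ j, z j * x j : ℝ) : ℂ)) * g z := by
    intro z
    have : (fun y => Φ (z, y)) = fun y =>
        Complex.exp (Complex.I * ((∑ j, z j * x j : ℝ) : ℂ)) *
          (Complex.exp (-Complex.I * ((∑ j, z j * y j : ℝ) : ℂ)) * (p y : ℂ)) := by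
      funext y; rw [hΦ]; ring
    rw [this, integral_const_mul, hg]
  calc ∫ y : Fin d → ℝ, (∫ z in cube, Real.cos (∑ j, z j * (x j - y j))) * p y
      = ∫ y, (∫ z, Φ (z, y) ∂μ).re := by
        exact integral_congr_ae (Filter.Eventually.of_forall fun y => key1 y)
    _ = (∫ y, ∫ z, Φ (z, y) ∂μ).re := key2
    _ = (∫ z, ∫ y, Φ (z, y) ∂volume ∂μ).re := congrArg Complex.re key3.symm
    _ = (∫ z in cube, Complex.exp (Complex.I * ((∑ j, z j * x j : ℝ) : ℂ)) * g z).re := by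
        rw [hμ]
        congr 1
        exact integral_congr_ae (Filter.Eventually.of_forall fun z => key4 z)

end Aux

/-- Truncated Fourier integral (sinc-kernel) representation: for continuous
integrable `p` with integrable Fourier transform,
`lim_{R→∞} (2π)^{-d} ∫ (∫_{[-R,R]^d} cos(z·(x-y)) dz) p(y) dy = p(x)`. -/
theorem stmt_7 {d : ℕ} (hd : 1 ≤ d)
    (p : (Fin d → ℝ) → ℝ) (hpc : Continuous p) (hpi : Integrable p)
    (hfour : Integrable (fun ξ : Fin d → ℝ =>
      ∫ y : Fin d → ℝ, Complex.exp (-Complex.I * (∑ j, ξ j * y j)) * (p y : ℂ))) :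
    ∀ x : Fin d → ℝ,
      Tendsto
        (fun R : ℝ => (1 / (2 * Real.pi) ^ d) *
          ∫ y : Fin d → ℝ,
            (∫ z in Set.univ.pi fun _ : Fin d => Set.Icc (-R) R,
              Real.cos (∑ j, z j * (x j - y j))) * p y)
        atTop (nhds (p x)) := by
  intro x
  set g : (Fin d → ℝ) → ℂ :=
    fun ξ => ∫ y : Fin d → ℝ,
      Complex.exp (-Complex.I * ((∑ j, ξ j * y j : ℝ) : ℂ)) * (p y : ℂ) with hgdef
  have hg : ∀ ξ, g ξ = ∫ y : Fin d → ℝ,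
      Complex.exp (-Complex.I * ((∑ j, ξ j * y j : ℝ) : ℂ)) * (p y : ℂ) := fun _ => rfl
  have hh : Integrable (fun z : Fin d → ℝ =>
      Complex.exp (Complex.I * ((∑ j, z j * x j : ℝ) : ℂ)) * g z) := by
    refine hfour.bdd_mul (c := 1) ?_ (Filter.Eventually.of_forall fun z => le_of_eq (norm_exp_I_mul _))
    exact (Complex.continuous_exp.comp (continuous_const.mul
      (Complex.continuous_ofReal.comp (by
        apply continuous_finset_sum; intro j _; fun_prop)))).aestronglyMeasurable
  have hlim := limit_step _ hh
  rw [inv_step p hpc hpi g hg hfour x] at hlim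
  have hfun : (fun R : ℝ => (1 / (2 * Real.pi) ^ d) *
      ∫ y : Fin d → ℝ,
        (∫ z in Set.univ.pi fun _ : Fin d => Set.Icc (-R) R,
          Real.cos (∑ j, z j * (x j - y j))) * p y)
      = fun R : ℝ => (1 / (2 * Real.pi) ^ d) *
          (∫ z in Set.univ.pi fun _ : Fin d => Set.Icc (-R) R,
            Complex.exp (Complex.I * ((∑ j, z j * x j : ℝ) : ℂ)) * g z).re := by
    funext R
    rw [fubini_step p hpc hpi g hg x R]
  rw [hfun]
  have h2 := ((Complex.continuous_re.tendsto _).comp hlim).const_mul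
    ((1 : ℝ) / (2 * Real.pi) ^ d)
  have hval : (1 : ℝ) / (2 * Real.pi) ^ d *
      ((((2 * Real.pi) ^ d : ℝ) : ℂ) * ((p x : ℝ) : ℂ)).re = p x := by
    rw [← Complex.ofReal_mul, Complex.ofReal_re]
    have hne : ((2 * Real.pi) ^ d : ℝ) ≠ 0 := by positivity
    field_simp
  rw [hval] at h2
  exact h2
end
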